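/- For every β > 0 and q > 0, the total energy of the Born–Infeld electric point charge satisfies 4π ∫₀^∞ q² / (ρ² + √(ρ⁴ + β q²)) dρ = 4 π^{5/2} q^{3/2} / (3 Γ(3/4)² β^{1/4}), where Γ is the Gamma function. Equivalently, ∫₀^∞ dx/(x² + √(x⁴ + 1)) = π^{3/2} / (3 Γ(3/4)²). -/

import Mathlib

open Real MeasureTheory Set Filter Topology

/-- Real Beta integral. -/
lemma realBeta (a b : ℝ) (ha : 0 < a) (hb : 0 < b) :
    ∫ x in (0:ℝ)..1, x ^ (a-1) * (1-x) ^ (b-1)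
      = Real.Gamma a * Real.Gamma b / Real.Gamma (a+b) := by
  have h := Complex.Gamma_mul_Gamma_eq_betaIntegral (s := (a:ℂ)) (t := (b:ℂ))
    (by simpa using ha) (by simpa using hb)
  have hbeta : Complex.betaIntegral (a:ℂ) (b:ℂ)
      = ((∫ x in (0:ℝ)..1, x ^ (a-1) * (1-x) ^ (b-1) : ℝ) : ℂ) := by
    rw [Complex.betaIntegral, ← intervalIntegral.integral_ofReal]
    refine intervalIntegral.integral_congr fun x hx => ?_
    rw [Set.uIcc_of_le (by norm_num : (0:ℝ) ≤ 1)] at hx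
    push_cast
    rw [Complex.ofReal_cpow hx.1, Complex.ofReal_cpow (by linarith [hx.2] : (0:ℝ) ≤ 1 - x)]
    push_cast
    ring
  rw [hbeta, ← Complex.ofReal_add, Complex.Gamma_ofReal, Complex.Gamma_ofReal,
    Complex.Gamma_ofReal, ← Complex.ofReal_mul, ← Complex.ofReal_mul] at h
  have := Complex.ofReal_inj.mp h
  have hG : Real.Gamma (a+b) ≠ 0 := (Real.Gamma_pos_of_pos (by linarith)).ne'
  field_simp
  linarith [this]

lemma betaIoi : ∫ t in Ioi (0:ℝ), t ^ (-(3:ℝ)/4) * (1+t) ^ (-(1:ℝ)/2)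
    = Real.Gamma (1/4) ^ 2 / Real.Gamma (1/2) := by
  have himg : (fun x : ℝ => x / (1-x)) '' Ioo 0 1 = Ioi 0 := by
    ext y
    constructor
    · rintro ⟨x, ⟨hx0, hx1⟩, rfl⟩
      exact div_pos hx0 (by linarith)
    · intro hy
      rw [mem_Ioi] at hy
      refine ⟨y / (1+y), ⟨div_pos hy (by linarith), ?_⟩, ?_⟩
      · rw [div_lt_one (by linarith)]; linarith
      · have h1y : (0:ℝ) < 1 + y := by linarith
        field_simp
        ring
  have hderiv : ∀ x ∈ Ioo (0:ℝ) 1,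
      HasDerivWithinAt (fun x : ℝ => x / (1-x)) (((1-x)^2)⁻¹) (Ioo 0 1) x := by
    intro x hx
    have h1x : (1:ℝ) - x ≠ 0 := by simp only [mem_Ioo] at hx; intro h; linarith [hx.2]
    have := (hasDerivAt_id x).div ((hasDerivAt_id x).const_sub 1) h1x
    refine this.hasDerivWithinAt.congr_deriv ?_
    simp only [id]; rw [inv_eq_one_div]; congr 1; ring
  have hinj : InjOn (fun x : ℝ => x / (1-x)) (Ioo 0 1) := by
    intro x hx y hy hxy
    simp only [mem_Ioo] at hx hy
    have h1x : (1:ℝ) - x ≠ 0 := by intro h; linarith [hx.2]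
    have h1y : (1:ℝ) - y ≠ 0 := by intro h; linarith [hy.2]
    field_simp at hxy
    linarith
  have key := integral_image_eq_integral_abs_deriv_smul measurableSet_Ioo hderiv hinj
    (fun t => t ^ (-(3:ℝ)/4) * (1+t) ^ (-(1:ℝ)/2))
  rw [himg] at key
  rw [key]
  have hcongr : ∀ x ∈ Ioo (0:ℝ) 1,
      |((1-x)^2)⁻¹| • ((x/(1-x)) ^ (-(3:ℝ)/4) * (1+x/(1-x)) ^ (-(1:ℝ)/2))
        = x ^ ((1:ℝ)/4 - 1) * (1-x) ^ ((1:ℝ)/4 - 1) := by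
    intro x hx
    obtain ⟨hx0, hx1⟩ := hx
    have h1x : (0:ℝ) < 1 - x := by linarith
    have e1 : (1:ℝ) + x/(1-x) = (1-x)⁻¹ := by field_simp; ring
    rw [smul_eq_mul, e1, Real.div_rpow hx0.le h1x.le, Real.inv_rpow h1x.le,
      abs_of_pos (by positivity), ← Real.rpow_neg h1x.le, ← Real.rpow_natCast (1-x) 2,
      ← Real.rpow_neg h1x.le, div_eq_mul_inv, ← Real.rpow_neg h1x.le,
      mul_comm ((1-x) ^ (-((2:ℕ):ℝ)))]
    rw [mul_assoc, mul_assoc, ← Real.rpow_add h1x, ← Real.rpow_add h1x]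
    norm_num
  rw [setIntegral_congr_fun measurableSet_Ioo hcongr, ← integral_Ioc_eq_integral_Ioo,
    ← intervalIntegral.integral_of_le (by norm_num : (0:ℝ) ≤ 1),
    realBeta (1/4) (1/4) (by norm_num) (by norm_num)]
  norm_num [sq]

lemma hid (x : ℝ) : Real.sqrt (x^4+1) - x^2 = (x^2 + Real.sqrt (x^4+1))⁻¹ := by
  have h : Real.sqrt (x^4+1) ^ 2 = x^4+1 := Real.sq_sqrt (by positivity)
  have hpos : 0 < x^2 + Real.sqrt (x^4+1) := by
    have := Real.sqrt_pos.mpr (show (0:ℝ) < x^4+1 by positivity); positivity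
  field_simp
  nlinarith [h]

lemma sqrt_ge_sq (x : ℝ) : x^2 ≤ Real.sqrt (x^4+1) := by
  nlinarith [Real.sq_sqrt (show (0:ℝ) ≤ x^4+1 by positivity),
    Real.sqrt_nonneg (x^4+1), sq_nonneg (Real.sqrt (x^4+1) - x^2)]

lemma sqrt_ge_one (x : ℝ) : 1 ≤ Real.sqrt (x^4+1) := by
  have h := Real.sqrt_le_sqrt (show (1:ℝ) ≤ x^4+1 by nlinarith [sq_nonneg (x^2)])
  simpa using h

lemma intH : IntegrableOn (fun x : ℝ => Real.sqrt (x^4+1) - x^2) (Ioi 0) := by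
  refine Integrable.mono (g := fun x : ℝ => (1+x^2)⁻¹)
    integrable_inv_one_add_sq.integrableOn ?_ ?_
  · exact ((Real.continuous_sqrt.comp (by continuity)).sub (continuous_pow 2)).aestronglyMeasurable.restrict
  · refine ae_of_all _ fun x => ?_
    have h1 := sqrt_ge_sq x
    have h2 := sqrt_ge_one x
    have hp : (0:ℝ) < 1 + x^2 := by positivity
    rw [Real.norm_eq_abs, Real.norm_eq_abs, abs_of_nonneg (by linarith),
      abs_of_nonneg (by positivity), hid]
    exact inv_anti₀ hp (by linarith)

lemma intJ : IntegrableOn (fun x : ℝ => (Real.sqrt (x^4+1))⁻¹) (Ioi 0) := by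
  refine Integrable.mono (g := fun x : ℝ => 2 * (1+x^2)⁻¹)
    (integrable_inv_one_add_sq.const_mul 2).integrableOn ?_ ?_
  · exact (Real.continuous_sqrt.comp (by continuity)).inv₀
      (fun x => by simp only [Function.comp]; nlinarith [sqrt_ge_one x]) |>.aestronglyMeasurable.restrict
  · refine ae_of_all _ fun x => ?_
    have h1 := sqrt_ge_sq x
    have h2 := sqrt_ge_one x
    have hp : (0:ℝ) < 1 + x^2 := by positivity
    simp only [Real.norm_eq_abs, abs_of_nonneg (show (0:ℝ) ≤ (Real.sqrt (x^4+1))⁻¹ by positivity),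
      abs_of_nonneg (show (0:ℝ) ≤ 2*(1+x^2)⁻¹ by positivity)]
    rw [show (2:ℝ) * (1+x^2)⁻¹ = ((1+x^2)/2)⁻¹ by field_simp]
    exact inv_anti₀ (by positivity) (by linarith)

lemma Jval : ∫ x in Ioi (0:ℝ), (Real.sqrt (x^4+1))⁻¹
    = Real.Gamma (1/4) ^ 2 / (4 * Real.Gamma (1/2)) := by
  have h := integral_comp_rpow_Ioi_of_pos
    (g := fun t : ℝ => t ^ (-(3:ℝ)/4) * (1+t) ^ (-(1:ℝ)/2)) (p := 4) (by norm_num)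
  rw [betaIoi] at h
  have hcongr : ∀ x ∈ Ioi (0:ℝ),
      ((4:ℝ) * x ^ ((4:ℝ) - 1)) • ((x ^ (4:ℝ)) ^ (-(3:ℝ)/4) * (1 + x ^ (4:ℝ)) ^ (-(1:ℝ)/2))
        = 4 * (Real.sqrt (x^4+1))⁻¹ := by
    intro x hx
    rw [mem_Ioi] at hx
    have h4 : x ^ (4:ℝ) = x ^ (4:ℕ) := Real.rpow_natCast x 4
    have e2 : (x ^ (4:ℝ)) ^ (-(3:ℝ)/4) = x ^ (-(3:ℝ)) := by
      rw [← Real.rpow_mul hx.le]; norm_num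
    have e3 : (1 + x ^ (4:ℝ)) ^ (-(1:ℝ)/2) = (Real.sqrt (x^4+1))⁻¹ := by
      rw [h4, add_comm, Real.sqrt_eq_rpow, ← Real.rpow_neg (by positivity)]
      norm_num
    rw [smul_eq_mul, e2, e3]
    have e4 : (4:ℝ) * x ^ ((4:ℝ)-1) * (x ^ (-(3:ℝ)) * (Real.sqrt (x^4+1))⁻¹)
        = 4 * (x ^ ((4:ℝ)-1) * x ^ (-(3:ℝ))) * (Real.sqrt (x^4+1))⁻¹ := by ring
    rw [e4, ← Real.rpow_add hx]
    norm_num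
  rw [setIntegral_congr_fun measurableSet_Ioi hcongr, MeasureTheory.integral_const_mul] at h
  rw [eq_div_iff (by positivity : (4:ℝ) * Real.Gamma (1/2) ≠ 0)]
  rw [eq_div_iff (Real.Gamma_pos_of_pos (by norm_num : (0:ℝ) < 1/2)).ne'] at h
  linear_combination h

lemma Irel : ∫ x in Ioi (0:ℝ), (Real.sqrt (x^4+1) - x^2)
    = (2/3) * ∫ x in Ioi (0:ℝ), (Real.sqrt (x^4+1))⁻¹ := by
  set F : ℝ → ℝ := fun x => (x * Real.sqrt (x^4+1) - x^3)/3 with hF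
  have hderiv : ∀ x : ℝ, HasDerivAt F
      (Real.sqrt (x^4+1) - x^2 - (2/3) * (Real.sqrt (x^4+1))⁻¹) x := by
    intro x
    have hpos : (0:ℝ) < x^4+1 := by positivity
    have hs : HasDerivAt (fun y : ℝ => Real.sqrt (y^4+1)) ((4*x^3 + 0) / (2*Real.sqrt (x^4+1))) x := by
      have hin : HasDerivAt (fun y : ℝ => y^4+1) (4*x^3 + 0) x := by
        simpa using (hasDerivAt_pow 4 x).add_const 1
      exact hin.sqrt hpos.ne'
    have h1 : HasDerivAt (fun y : ℝ => y * Real.sqrt (y^4+1) - y^3)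
        (1 * Real.sqrt (x^4+1) + x * ((4*x^3 + 0) / (2*Real.sqrt (x^4+1))) - 3*x^2) x := by
      have := ((hasDerivAt_id x).mul hs).sub (hasDerivAt_pow 3 x)
      exact this.congr_deriv (by norm_num)
    have h2 := h1.div_const 3
    refine h2.congr_deriv (Eq.symm ?_)
    have hsq : Real.sqrt (x^4+1) ^ 2 = x^4+1 := Real.sq_sqrt hpos.le
    have hsne : Real.sqrt (x^4+1) ≠ 0 := by nlinarith [sqrt_ge_one x]
    field_simp
    linear_combination 4 * hsq
  have hlim : Tendsto F atTop (𝓝 0) := by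
    have hFeq : ∀ x : ℝ, F x = x * (x^2 + Real.sqrt (x^4+1))⁻¹ / 3 := by
      intro x
      rw [hF, ← hid x]
      ring
    have hbound : ∀ᶠ x : ℝ in atTop, F x ≤ 1/(6*x) := by
      filter_upwards [eventually_ge_atTop (1:ℝ)] with x hx
      rw [hFeq]
      have h1 := sqrt_ge_sq x
      have hp : (0:ℝ) < x^2 + Real.sqrt (x^4+1) := by nlinarith [sqrt_ge_one x]
      have h2x : (2:ℝ)*x^2 ≤ x^2 + Real.sqrt (x^4+1) := by linarith
      have hinv : (x^2 + Real.sqrt (x^4+1))⁻¹ ≤ (2*x^2)⁻¹ :=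
        inv_anti₀ (by nlinarith) h2x
      have hx0 : (0:ℝ) < x := by linarith
      calc x * (x^2 + Real.sqrt (x^4+1))⁻¹ / 3 ≤ x * (2*x^2)⁻¹ / 3 := by
            have := mul_le_mul_of_nonneg_left hinv hx0.le
            linarith
        _ = 1/(6*x) := by field_simp; ring
    have hnn : ∀ᶠ x : ℝ in atTop, 0 ≤ F x := by
      filter_upwards [eventually_ge_atTop (0:ℝ)] with x hx
      rw [hFeq]
      have hp : (0:ℝ) < x^2 + Real.sqrt (x^4+1) := by nlinarith [sqrt_ge_one x]
      positivity
    have hg : Tendsto (fun x : ℝ => 1/(6*x)) atTop (𝓝 0) := by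
      have h6 : Tendsto (fun x:ℝ => (6*x)⁻¹) atTop (𝓝 0) :=
        tendsto_inv_atTop_zero.comp (tendsto_id.const_mul_atTop (show (0:ℝ) < 6 by norm_num))
      simpa [one_div] using h6
    exact squeeze_zero' hnn hbound hg
  have hF'int : IntegrableOn (fun x : ℝ =>
      Real.sqrt (x^4+1) - x^2 - (2/3) * (Real.sqrt (x^4+1))⁻¹) (Ioi 0) :=
    intH.sub (intJ.const_mul (2/3))
  have hFTC := integral_Ioi_of_hasDerivAt_of_tendsto' (a := 0)
    (fun x _ => hderiv x) hF'int hlim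
  have hF0 : F 0 = 0 := by simp [hF]
  rw [hF0, sub_zero] at hFTC
  rw [MeasureTheory.integral_sub intH (intJ.const_mul (2/3)),
    MeasureTheory.integral_const_mul] at hFTC
  linarith [hFTC]

lemma Ival : ∫ x in Ioi (0:ℝ), 1 / (x ^ 2 + Real.sqrt (x ^ 4 + 1))
    = Real.pi ^ ((3 : ℝ) / 2) / (3 * (Real.Gamma (3 / 4)) ^ 2) := by
  have hcongr : ∀ x ∈ Ioi (0:ℝ), 1 / (x ^ 2 + Real.sqrt (x ^ 4 + 1))
      = Real.sqrt (x^4+1) - x^2 := fun x _ => by rw [one_div, ← hid]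
  rw [setIntegral_congr_fun measurableSet_Ioi hcongr, Irel, Jval, Real.Gamma_one_half_eq]
  have h2 : Real.Gamma (1/4) * Real.Gamma (3/4) = Real.sqrt 2 * Real.pi := by
    have h := Real.Gamma_mul_Gamma_one_sub (1/4)
    rw [show (1:ℝ) - 1/4 = 3/4 by norm_num, show Real.pi * (1/4) = Real.pi/4 by ring,
      Real.sin_pi_div_four] at h
    rw [h]
    have hs2 : Real.sqrt 2 ^ 2 = 2 := Real.sq_sqrt (by norm_num)
    have hs2ne : Real.sqrt 2 ≠ 0 := by positivity
    field_simp
    linear_combination (-1) * hs2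
  have hs2 : Real.sqrt 2 ^ 2 = 2 := Real.sq_sqrt (by norm_num)
  have hsπ : Real.sqrt Real.pi ^ 2 = Real.pi := Real.sq_sqrt Real.pi_pos.le
  have hsπne : Real.sqrt Real.pi ≠ 0 := by positivity
  have hπ32 : Real.pi ^ ((3:ℝ)/2) = Real.pi^2 / Real.sqrt Real.pi := by
    rw [Real.sqrt_eq_rpow, ← Real.rpow_natCast Real.pi 2, ← Real.rpow_sub Real.pi_pos]
    norm_num
  have hG34 : 0 < Real.Gamma (3/4) := Real.Gamma_pos_of_pos (by norm_num)
  rw [hπ32]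
  field_simp
  linear_combination (2 * (Real.Gamma (1/4) * Real.Gamma (3/4))
      + 2 * Real.sqrt 2 * Real.pi) * h2
    + 2 * Real.pi^2 * hs2

/-- The total energy of the Born–Infeld electric point charge:
`4π ∫₀^∞ q²/(ρ² + √(ρ⁴ + βq²)) dρ = 4π^{5/2} q^{3/2}/(3Γ(3/4)² β^{1/4})`; equivalently
`∫₀^∞ dx/(x² + √(x⁴+1)) = π^{3/2}/(3Γ(3/4)²)`. -/
theorem stmt6 (β q : ℝ) (hβ : 0 < β) (hq : 0 < q) :
    4 * Real.pi * ∫ ρ in Set.Ioi (0 : ℝ), q ^ 2 / (ρ ^ 2 + Real.sqrt (ρ ^ 4 + β * q ^ 2))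
      = 4 * Real.pi ^ ((5 : ℝ) / 2) * q ^ ((3 : ℝ) / 2)
        / (3 * (Real.Gamma (3 / 4)) ^ 2 * β ^ ((1 : ℝ) / 4)) ∧
    ∫ x in Set.Ioi (0 : ℝ), 1 / (x ^ 2 + Real.sqrt (x ^ 4 + 1))
      = Real.pi ^ ((3 : ℝ) / 2) / (3 * (Real.Gamma (3 / 4)) ^ 2) := by
  refine ⟨?_, Ival⟩
  set c : ℝ := β ^ ((1:ℝ)/4) * q ^ ((1:ℝ)/2) with hc
  have hcpos : 0 < c := by positivity
  have hc4 : c ^ 4 = β * q ^ 2 := by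
    rw [hc, mul_pow, ← Real.rpow_natCast (β ^ ((1:ℝ)/4)) 4,
      ← Real.rpow_natCast (q ^ ((1:ℝ)/2)) 4, ← Real.rpow_mul hβ.le, ← Real.rpow_mul hq.le]
    norm_num
  have hsub := MeasureTheory.integral_comp_mul_left_Ioi
    (fun ρ => q ^ 2 / (ρ ^ 2 + Real.sqrt (ρ ^ 4 + β * q ^ 2))) 0 hcpos
  rw [mul_zero, smul_eq_mul] at hsub
  have hg : ∀ x : ℝ, q ^ 2 / ((c*x) ^ 2 + Real.sqrt ((c*x) ^ 4 + β * q ^ 2))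
      = (q^2/c^2) * (1 / (x ^ 2 + Real.sqrt (x ^ 4 + 1))) := by
    intro x
    have e1 : (c*x)^4 + β*q^2 = (c^2)^2 * (x^4+1) := by rw [← hc4]; ring
    have e2 : Real.sqrt ((c*x)^4 + β*q^2) = c^2 * Real.sqrt (x^4+1) := by
      rw [e1, Real.sqrt_mul (by positivity), Real.sqrt_sq (by positivity)]
    have hden : 0 < x^2 + Real.sqrt (x^4+1) := by nlinarith [sqrt_ge_one x, sq_nonneg x]
    rw [e2, show (c*x)^2 + c^2*Real.sqrt (x^4+1) = c^2*(x^2 + Real.sqrt (x^4+1)) by ring,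
      ← div_div, mul_one_div, div_div]
  beta_reduce at hsub
  have hint : ∫ ρ in Ioi (0:ℝ), q ^ 2 / (ρ ^ 2 + Real.sqrt (ρ ^ 4 + β * q ^ 2))
      = c * ((q^2/c^2) * ∫ x in Ioi (0:ℝ), 1 / (x ^ 2 + Real.sqrt (x ^ 4 + 1))) := by
    have heq : (∫ x in Ioi (0:ℝ), q ^ 2 / ((c*x) ^ 2 + Real.sqrt ((c*x) ^ 4 + β * q ^ 2)))
        = (q^2/c^2) * ∫ x in Ioi (0:ℝ), 1 / (x ^ 2 + Real.sqrt (x ^ 4 + 1)) := by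
      rw [← MeasureTheory.integral_const_mul]
      exact MeasureTheory.integral_congr_ae (ae_of_all _ fun x => hg x)
    rw [← heq, hsub]
    field_simp
  rw [hint, Ival]
  have eq1 : q ^ ((1:ℝ)/2) * q ^ ((3:ℝ)/2) = q ^ 2 := by
    rw [← Real.rpow_add hq, ← Real.rpow_natCast q 2]; norm_num
  have eq2 : Real.pi * Real.pi ^ ((3:ℝ)/2) = Real.pi ^ ((5:ℝ)/2) := by
    rw [show (5:ℝ)/2 = 1 + 3/2 by norm_num, Real.rpow_add Real.pi_pos, Real.rpow_one]
  have hG34 : 0 < Real.Gamma (3/4) := Real.Gamma_pos_of_pos (by norm_num)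
  have hA : (0:ℝ) < β ^ ((1:ℝ)/4) := by positivity
  have hB : (0:ℝ) < q ^ ((1:ℝ)/2) := by positivity
  rw [hc, ← eq1, ← eq2]
  field_simp
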